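/- Let G be a nontrivial connected graph of order n ≥ 2 with average degree d̄(G) = 2|E(G)|/n. Then prc(G) ≥ ⌈d̄(G)⌉. -/

import Mathlib

open SimpleGraph

variable {V : Type*}

/-- A walk is rainbow under edge colouring `c` if its edges receive pairwise distinct colours. -/
def SimpleGraph.Walk.IsRainbow {G : SimpleGraph V} {u v : V} (c : Sym2 V → ℕ) (p : G.Walk u v) :
    Prop :=
  (p.edges.map c).Nodup

/-- `G` is rainbow connected under the edge colouring `c`: any two vertices are joined by a
rainbow path. -/
def SimpleGraph.RainbowConnected (G : SimpleGraph V) (c : Sym2 V → ℕ) : Prop :=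
  ∀ u v : V, ∃ p : G.Walk u v, p.IsPath ∧ p.IsRainbow c

/-- `c` is a proper edge colouring of `G`: adjacent edges receive distinct colours. -/
def SimpleGraph.IsProperEdgeColoring (G : SimpleGraph V) (c : Sym2 V → ℕ) : Prop :=
  ∀ ⦃u v w : V⦄, G.Adj u v → G.Adj u w → v ≠ w → c s(u, v) ≠ c s(u, w)

/-- The colouring `c` uses at most `k` colours on the edges of `G`. -/
def SimpleGraph.ColorsLE (G : SimpleGraph V) (c : Sym2 V → ℕ) (k : ℕ) : Prop :=
  ∀ e ∈ G.edgeSet, c e < k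

/-- The rainbow connection number `rc(G)`. -/
noncomputable def SimpleGraph.rcNumber (G : SimpleGraph V) : ℕ :=
  sInf {k | ∃ c : Sym2 V → ℕ, G.ColorsLE c k ∧ G.RainbowConnected c}

/-- The proper rainbow connection number `prc(G)`. -/
noncomputable def SimpleGraph.prcNumber (G : SimpleGraph V) : ℕ :=
  sInf {k | ∃ c : Sym2 V → ℕ, G.ColorsLE c k ∧ G.IsProperEdgeColoring c ∧ G.RainbowConnected c}

/-- The chromatic index `χ'(G)`. -/
noncomputable def SimpleGraph.chromaticIndex (G : SimpleGraph V) : ℕ :=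
  sInf {k | ∃ c : Sym2 V → ℕ, G.ColorsLE c k ∧ G.IsProperEdgeColoring c}

theorem stmt17 {V : Type*} [Fintype V] [DecidableEq V] (G : SimpleGraph V) [DecidableRel G.Adj]
    (hconn : G.Connected) (hn : 2 ≤ Fintype.card V) :
    (⌈(2 * (G.edgeFinset.card : ℝ)) / (Fintype.card V : ℝ)⌉ : ℤ) ≤ (G.prcNumber : ℤ) := by

  have hn0 : (0:ℝ) < (Fintype.card V : ℝ) := by positivity
  set S := {k | ∃ c : Sym2 V → ℕ, G.ColorsLE c k ∧ G.IsProperEdgeColoring c ∧ G.RainbowConnected c}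
    with hSdef
  have hS : S.Nonempty := by
    refine ⟨Fintype.card (Sym2 V), fun e => (Fintype.equivFin (Sym2 V) e).val, ?_, ?_, ?_⟩
    · intro e he
      exact (Fintype.equivFin (Sym2 V) e).isLt
    · intro u v w huv huw hvw h
      have hinj : s(u, v) = s(u, w) :=
        (Fintype.equivFin (Sym2 V)).injective (Fin.val_injective h)
      rw [Sym2.eq_iff] at hinj
      rcases hinj with ⟨_, rfl⟩ | ⟨rfl, rfl⟩
      · exact hvw rfl
      · exact G.irrefl huw
    · intro u v
      obtain ⟨w⟩ := hconn u v
      refine ⟨w.toPath.1, w.toPath.2, ?_⟩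
      exact List.Nodup.map (Fin.val_injective.comp (Fintype.equivFin (Sym2 V)).injective)
        w.toPath.2.isTrail.edges_nodup
  have hmem : G.prcNumber ∈ S := Nat.sInf_mem hS
  obtain ⟨c, hcle, hprop, -⟩ := hmem
  set k := G.prcNumber with hk
  have hdeg : ∀ v, G.degree v ≤ k := by
    intro v
    have h1 : (G.neighborFinset v).card ≤ (Finset.range k).card := by
      apply Finset.card_le_card_of_injOn (fun w => c s(v, w))
      · intro w hw
        rw [Finset.mem_coe, SimpleGraph.mem_neighborFinset] at hw
        simpa using hcle _ (G.mem_edgeSet.mpr hw)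
      · intro w₁ hw₁ w₂ hw₂ hcc
        rw [Finset.mem_coe, SimpleGraph.mem_neighborFinset] at hw₁ hw₂
        by_contra hne
        exact hprop hw₁ hw₂ hne hcc
    simpa using h1
  have hsum : 2 * G.edgeFinset.card ≤ Fintype.card V * k := by
    calc 2 * G.edgeFinset.card = ∑ v, G.degree v :=
          (SimpleGraph.sum_degrees_eq_twice_card_edges G).symm
      _ ≤ ∑ _v : V, k := Finset.sum_le_sum fun v _ => hdeg v
      _ = Fintype.card V * k := by simp [Finset.sum_const, mul_comm]
  rw [Int.ceil_le]
  rw [div_le_iff₀ hn0]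
  push_cast
  have : (2 * G.edgeFinset.card : ℝ) ≤ (Fintype.card V * k : ℕ) := by exact_mod_cast hsum
  push_cast at this
  linarith
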